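/- Under the null hypothesis of mutual independence of the components of X and the MCAR mechanism, for each pair k ≠ l the expected value of the squared pairwise Kendall statistic equals E(τ̃_kl^2) = (4/(n(n−1))) q_k^2 q_l^2 ((n−2) q_k q_l / 9 + 1/2). -/

import Mathlib

open MeasureTheory ProbabilityTheory Filter Finset

namespace KendallMissing

/-- Setup: `X i k` is the `k`-th component of the `i`-th observation, `R i k` the
corresponding response (missingness) indicator with `P(R i k = 1) = q k` (MCAR,
Bernoulli, independent across cells and of the data).  Under the null hypothesis `H₀`
of total (mutual) independence of the components, together with the i.i.d. sampling,
the whole family `{X i k} ∪ {R i k}` is mutually independent, the `X i k` are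
identically distributed in `i`, and the marginals are continuous (atomless). -/
structure Setup {Ω : Type*} [MeasurableSpace Ω] (μ : Measure Ω)
    (X R : ℕ → ℕ → Ω → ℝ) (q : ℕ → ℝ) : Prop where
  isProb : IsProbabilityMeasure μ
  measX : ∀ i k, Measurable (X i k)
  measR : ∀ i k, Measurable (R i k)
  indep : iIndepFun
      (fun (p : (ℕ × ℕ) × Bool) => if p.2 then R p.1.1 p.1.2 else X p.1.1 p.1.2) μ
  identX : ∀ i k, μ.map (X i k) = μ.map (X 0 k)
  contX : ∀ i k (x : ℝ), μ {ω | X i k ω = x} = 0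
  Rval : ∀ i k ω, R i k ω = 0 ∨ R i k ω = 1
  Rq : ∀ i k, μ {ω | R i k ω = 1} = ENNReal.ofReal (q k)
  q_nonneg : ∀ k, 0 ≤ q k
  q_le_one : ∀ k, q k ≤ 1

variable {Ω : Type*} [MeasurableSpace Ω]

/-- Expectation of a real random variable. -/
noncomputable def mean (μ : Measure Ω) (f : Ω → ℝ) : ℝ := ∫ ω, f ω ∂μ

/-- Variance of a real random variable. -/
noncomputable def var (μ : Measure Ω) (f : Ω → ℝ) : ℝ :=
  ∫ ω, (f ω - mean μ f) ^ 2 ∂μ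

/-- Covariance of two real random variables. -/
noncomputable def cov (μ : Measure Ω) (f g : Ω → ℝ) : ℝ :=
  ∫ ω, (f ω - mean μ f) * (g ω - mean μ g) ∂μ

/-- Completeness indicator `S i = ∏_{k<d} R i k` of the `i`-th observation. -/
noncomputable def Scomp (R : ℕ → ℕ → Ω → ℝ) (d i : ℕ) (ω : Ω) : ℝ :=
  ∏ k ∈ range d, R i k ω

/-- Complete-case Kendall tau `τ_kl^cc`. -/
noncomputable def tauCC (X R : ℕ → ℕ → Ω → ℝ) (n d k l : ℕ) (ω : Ω) : ℝ :=
  2 / ((n : ℝ) * ((n : ℝ) - 1)) *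
    ∑ i ∈ range n, ∑ j ∈ range i,
      Real.sign (X i k ω - X j k ω) * Real.sign (X i l ω - X j l ω) *
        (Scomp R d i ω * Scomp R d j ω)

/-- Complete-case test statistic `T_nd^cc = Σ_{l<k<d} (τ_kl^cc)²`. -/
noncomputable def TCC (X R : ℕ → ℕ → Ω → ℝ) (n d : ℕ) (ω : Ω) : ℝ :=
  ∑ k ∈ range d, ∑ l ∈ range k, (tauCC X R n d k l ω) ^ 2

/-- Pairwise (cell-wise) Kendall tau `τ̃_kl`. -/
noncomputable def tauP (X R : ℕ → ℕ → Ω → ℝ) (n k l : ℕ) (ω : Ω) : ℝ :=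
  2 / ((n : ℝ) * ((n : ℝ) - 1)) *
    ∑ i ∈ range n, ∑ j ∈ range i,
      Real.sign (X i k ω - X j k ω) * Real.sign (X i l ω - X j l ω) *
        (R i k ω * R j k ω * R i l ω * R j l ω)

/-- Pairwise test statistic `T̃_nd = Σ_{l<k<d} τ̃_kl²`. -/
noncomputable def Ttilde (X R : ℕ → ℕ → Ω → ℝ) (n d : ℕ) (ω : Ω) : ℝ :=
  ∑ k ∈ range d, ∑ l ∈ range k, (tauP X R n k l ω) ^ 2

/-- The kernel `f_k(i,j) = sgn(X_ik - X_jk) R_ik R_jk`. -/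
noncomputable def fker (X R : ℕ → ℕ → Ω → ℝ) (k i j : ℕ) (ω : Ω) : ℝ :=
  Real.sign (X i k ω - X j k ω) * (R i k ω * R j k ω)

/-- The `U`-statistic
`U_kl = (n(n-1)(n-2)(n-3))⁻¹ Σ_{i₁≠i₂≠i₃≠i₄} f_k(i₁,i₂) f_l(i₁,i₂) f_k(i₃,i₄) f_l(i₃,i₄)`,
the sum being over quadruples of pairwise distinct indices. -/
noncomputable def Ustat (X R : ℕ → ℕ → Ω → ℝ) (n k l : ℕ) (ω : Ω) : ℝ :=
  (1 / ((n : ℝ) * ((n : ℝ) - 1) * ((n : ℝ) - 2) * ((n : ℝ) - 3))) *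
    ∑ i1 ∈ range n, ∑ i2 ∈ range n, ∑ i3 ∈ range n, ∑ i4 ∈ range n,
      if i1 ≠ i2 ∧ i1 ≠ i3 ∧ i1 ≠ i4 ∧ i2 ≠ i3 ∧ i2 ≠ i4 ∧ i3 ≠ i4 then
        fker X R k i1 i2 ω * fker X R l i1 i2 ω * fker X R k i3 i4 ω * fker X R l i3 i4 ω
      else 0

/-- The `U`-statistic based test statistic `T̂_nd = Σ_{l<k<d} U_kl`. -/
noncomputable def That (X R : ℕ → ℕ → Ω → ℝ) (n d : ℕ) (ω : Ω) : ℝ :=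
  ∑ k ∈ range d, ∑ l ∈ range k, Ustat X R n k l ω

/-- The martingale-difference summands `Y_{n,k} = (2/√Var(T̂_nd)) Σ_{l<k} U_kl`. -/
noncomputable def Y (μ : Measure Ω) (X R : ℕ → ℕ → Ω → ℝ) (n d k : ℕ) (ω : Ω) : ℝ :=
  (2 / Real.sqrt (var μ (That X R n d))) * ∑ l ∈ range k, Ustat X R n k l ω

/-- The σ-field `F_{m,t} = σ{(X i j, R i j) : i < m, j < t}` (0-indexed). -/
def Fsig (X R : ℕ → ℕ → Ω → ℝ) (m t : ℕ) : MeasurableSpace Ω :=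
  ⨆ i ∈ Finset.range m, ⨆ j ∈ Finset.range t,
    (MeasurableSpace.comap (X i j) inferInstance ⊔ MeasurableSpace.comap (R i j) inferInstance)

end KendallMissing

namespace KendallMissing


noncomputable def sg (a b : ℝ) : ℝ := Real.sign (a - b)

lemma measurable_rsign : Measurable Real.sign := by
  have : Real.sign = fun x : ℝ => if x < 0 then (-1:ℝ) else if 0 < x then 1 else 0 := rfl
  rw [this]
  exact Measurable.ite (measurableSet_lt measurable_id measurable_const) measurable_const
    (Measurable.ite (measurableSet_lt measurable_const measurable_id) measurable_const
      measurable_const)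

lemma abs_rsign_le (x : ℝ) : |Real.sign x| ≤ 1 := by
  rcases Real.sign_apply_eq x with h|h|h <;> rw [h] <;> norm_num

lemma abs_sg_le (a b : ℝ) : |sg a b| ≤ 1 := abs_rsign_le _

@[fun_prop]
lemma sg_meas {α : Type*} [MeasurableSpace α] {f g : α → ℝ} (hf : Measurable f)
    (hg : Measurable g) : Measurable fun x => sg (f x) (g x) :=
  measurable_rsign.comp (hf.sub hg)

lemma sg_flip (a b : ℝ) : sg a b = - sg b a := by
  unfold sg
  rw [show a - b = -(b - a) by ring, Real.sign_neg]

lemma abs_mul_le_one {a b : ℝ} (ha : |a| ≤ 1) (hb : |b| ≤ 1) : |a * b| ≤ 1 := by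
  rw [abs_mul]
  exact mul_le_one₀ ha (abs_nonneg b) hb

lemma ibdd {α : Type*} [MeasurableSpace α] {μ : Measure α} [IsFiniteMeasure μ] {f : α → ℝ}
    (hm : AEStronglyMeasurable f μ) (hb : ∀ x, |f x| ≤ 1) : Integrable f μ :=
  ⟨hm, HasFiniteIntegral.of_bounded (C := 1)
    (Filter.Eventually.of_forall fun x => by simpa using hb x)⟩

section nu
variable (ν : Measure ℝ) [IsProbabilityMeasure ν]

noncomputable def hfun : ℝ → ℝ := fun y => ∫ z, sg y z ∂ν

lemma hfun_meas : Measurable (hfun ν) := by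
  have : Measurable fun p : ℝ × ℝ => sg p.1 p.2 := by fun_prop
  exact (this.stronglyMeasurable.integral_prod_right').measurable

lemma abs_hfun_le (y : ℝ) : |hfun ν y| ≤ 1 := by
  have := norm_integral_le_of_norm_le_const (μ := ν) (f := fun z => sg y z) (C := 1)
    (Filter.Eventually.of_forall fun z => by simpa using abs_sg_le y z)
  simpa [hfun] using this

lemma hfun_eq (y : ℝ) : hfun ν y = ∫ z, sg y z ∂ν := rfl

/-- `∫ sg = 0` over `ν × ν`. -/
lemma int_sg_pair : ∫ p : ℝ × ℝ, sg p.1 p.2 ∂(ν.prod ν) = 0 := by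
  have hswap : ∫ p : ℝ × ℝ, sg p.2 p.1 ∂(ν.prod ν)
      = ∫ p : ℝ × ℝ, sg p.1 p.2 ∂(ν.prod ν) := by
    conv_rhs => rw [← Measure.prod_swap]
    rw [integral_map measurable_swap.aemeasurable
      ((sg_meas measurable_fst measurable_snd).aestronglyMeasurable)]
    rfl
  have h2 : ∫ p : ℝ × ℝ, sg p.2 p.1 ∂(ν.prod ν) = - ∫ p : ℝ × ℝ, sg p.1 p.2 ∂(ν.prod ν) := by
    rw [← integral_neg]
    exact integral_congr_ae (Filter.Eventually.of_forall fun p => sg_flip p.2 p.1)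
  linarith [hswap, h2]

lemma diag_null (hν : ∀ x : ℝ, ν {x} = 0) :
    (ν.prod ν) {p : ℝ × ℝ | p.1 = p.2} = 0 := by
  have hms : MeasurableSet {p : ℝ × ℝ | p.1 = p.2} :=
    measurableSet_eq_fun measurable_fst measurable_snd
  rw [Measure.prod_apply hms]
  have hpre : ∀ x : ℝ, (Prod.mk x ⁻¹' {p : ℝ × ℝ | p.1 = p.2}) = {x} := by
    intro x; ext y; simp [eq_comm]
  simp [hpre, hν]
end nu

section nu2
variable (ν : Measure ℝ) [IsProbabilityMeasure ν]

lemma meas_f1 : Measurable fun p : ℝ × ℝ × ℝ => sg p.1 p.2.1 * sg p.1 p.2.2 := by fun_prop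
lemma meas_f2 : Measurable fun p : ℝ × ℝ × ℝ => sg p.2.1 p.1 * sg p.2.1 p.2.2 := by fun_prop
lemma meas_f3 : Measurable fun p : ℝ × ℝ × ℝ => sg p.2.2 p.1 * sg p.2.2 p.2.1 := by fun_prop

lemma int_f1 : Integrable (fun p : ℝ × ℝ × ℝ => sg p.1 p.2.1 * sg p.1 p.2.2)
    (ν.prod (ν.prod ν)) :=
  ibdd (meas_f1).aestronglyMeasurable fun p => abs_mul_le_one (abs_sg_le _ _) (abs_sg_le _ _)
lemma int_f2 : Integrable (fun p : ℝ × ℝ × ℝ => sg p.2.1 p.1 * sg p.2.1 p.2.2)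
    (ν.prod (ν.prod ν)) :=
  ibdd (meas_f2).aestronglyMeasurable fun p => abs_mul_le_one (abs_sg_le _ _) (abs_sg_le _ _)
lemma int_f3 : Integrable (fun p : ℝ × ℝ × ℝ => sg p.2.2 p.1 * sg p.2.2 p.2.1)
    (ν.prod (ν.prod ν)) :=
  ibdd (meas_f3).aestronglyMeasurable fun p => abs_mul_le_one (abs_sg_le _ _) (abs_sg_le _ _)

lemma hJ_eq : ∫ p : ℝ × ℝ × ℝ, sg p.1 p.2.1 * sg p.1 p.2.2 ∂(ν.prod (ν.prod ν))
    = ∫ x, hfun ν x * hfun ν x ∂ν := by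
  rw [integral_prod _ (int_f1 ν)]
  refine integral_congr_ae (Filter.Eventually.of_forall fun x => ?_)
  exact integral_prod_mul (μ := ν) (ν := ν) (fun a => sg x a) (fun b => sg x b)

lemma hK_eq : ∫ p : ℝ × ℝ × ℝ, sg p.2.1 p.1 * sg p.2.1 p.2.2 ∂(ν.prod (ν.prod ν))
    = ∫ x, hfun ν x * hfun ν x ∂ν := by
  rw [integral_prod _ (int_f2 ν)]
  have inner : ∀ x : ℝ, (∫ q : ℝ × ℝ, sg q.1 x * sg q.1 q.2 ∂(ν.prod ν))
      = ∫ y, sg y x * hfun ν y ∂ν := by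
    intro x
    rw [integral_prod _ (ibdd (by fun_prop : Measurable fun q : ℝ × ℝ =>
        sg q.1 x * sg q.1 q.2).aestronglyMeasurable
        fun q => abs_mul_le_one (abs_sg_le _ _) (abs_sg_le _ _))]
    refine integral_congr_ae (Filter.Eventually.of_forall fun y => ?_)
    exact integral_const_mul (sg y x) (fun z => sg y z)
  calc ∫ x, ∫ q : ℝ × ℝ, sg q.1 x * sg q.1 q.2 ∂(ν.prod ν) ∂ν
      = ∫ x, ∫ y, sg y x * hfun ν y ∂ν ∂ν := by
        exact integral_congr_ae (Filter.Eventually.of_forall fun x => inner x)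
    _ = ∫ y, ∫ x, sg y x * hfun ν y ∂ν ∂ν := by
        refine integral_integral_swap (ibdd ?_ ?_)
        · exact ((sg_meas (measurable_snd) (measurable_fst)).mul
            ((hfun_meas ν).comp measurable_snd)).aestronglyMeasurable
        · exact fun p => abs_mul_le_one (abs_sg_le _ _) (abs_hfun_le ν _)
    _ = ∫ y, hfun ν y * hfun ν y ∂ν := by
        refine integral_congr_ae (Filter.Eventually.of_forall fun y => ?_)
        show (∫ x, sg y x * hfun ν y ∂ν) = hfun ν y * hfun ν y
        rw [integral_mul_const]
        rfl

lemma hL_eq : ∫ p : ℝ × ℝ × ℝ, sg p.2.2 p.1 * sg p.2.2 p.2.1 ∂(ν.prod (ν.prod ν))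
    = ∫ p : ℝ × ℝ × ℝ, sg p.2.1 p.1 * sg p.2.1 p.2.2 ∂(ν.prod (ν.prod ν)) := by
  rw [integral_prod _ (int_f3 ν), integral_prod _ (int_f2 ν)]
  refine integral_congr_ae (Filter.Eventually.of_forall fun x => ?_)
  show ∫ q : ℝ × ℝ, sg q.2 x * sg q.2 q.1 ∂(ν.prod ν)
      = ∫ q : ℝ × ℝ, sg q.1 x * sg q.1 q.2 ∂(ν.prod ν)
  conv_lhs => rw [← Measure.prod_swap]
  rw [integral_map measurable_swap.aemeasurable
    ((by fun_prop : Measurable fun q : ℝ × ℝ => sg q.2 x * sg q.2 q.1)).aestronglyMeasurable]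
  rfl

end nu2

set_option maxRecDepth 8000 in
lemma sg_pos' {a b : ℝ} (h : b < a) : sg a b = 1 := Real.sign_of_pos (by simpa [sub_pos] using h)
lemma sg_neg' {a b : ℝ} (h : a < b) : sg a b = -1 := Real.sign_of_neg (by simpa [sub_neg] using h)
lemma sg_eq' {a b : ℝ} (h : a = b) : sg a b = 0 := by simp [sg, h, Real.sign_zero]

set_option maxRecDepth 8000 in
lemma sgn3_id (x y z : ℝ) :
    sg x y * sg x z + sg y x * sg y z + sg z x * sg z y
      = if x = y ∧ y = z then 0 else 1 := by
  rcases lt_trichotomy x y with h1|h1|h1 <;> rcases lt_trichotomy y z with h2|h2|h2 <;>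
    rcases lt_trichotomy x z with h3|h3|h3 <;>
    (try (exfalso; linarith)) <;>
    simp_all [sg_pos', sg_neg', sg_eq', lt_irrefl] <;>
    (try split_ifs with H) <;>
    first
      | (exfalso; (try obtain ⟨h4, h5⟩ := id H); subst_vars; linarith)
      | rfl
      | (intro h; (try intro h'); linarith)
      | norm_num

section nu3
variable (ν : Measure ℝ) [IsProbabilityMeasure ν]

lemma tdiag_null (hν : ∀ x : ℝ, ν {x} = 0) :
    (ν.prod (ν.prod ν)) {p : ℝ × ℝ × ℝ | p.1 = p.2.1} = 0 := by
  have hms : MeasurableSet {p : ℝ × ℝ × ℝ | p.1 = p.2.1} :=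
    measurableSet_eq_fun measurable_fst (measurable_fst.comp measurable_snd)
  rw [Measure.prod_apply hms]
  have hpre : ∀ x : ℝ, (Prod.mk x ⁻¹' {p : ℝ × ℝ × ℝ | p.1 = p.2.1})
      = ({x} ×ˢ Set.univ : Set (ℝ × ℝ)) := by
    intro x; ext ⟨a, b⟩; simp [eq_comm]
  have hz : ∀ x : ℝ, (ν.prod ν) (Prod.mk x ⁻¹' {p : ℝ × ℝ × ℝ | p.1 = p.2.1}) = 0 := by
    intro x
    rw [hpre x, Measure.prod_prod, hν x, zero_mul]
  exact (lintegral_congr hz).trans lintegral_zero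

lemma int_sg3 (hν : ∀ x : ℝ, ν {x} = 0) :
    ∫ p : ℝ × ℝ × ℝ, sg p.1 p.2.1 * sg p.1 p.2.2 ∂(ν.prod (ν.prod ν)) = 1 / 3 := by
  have key : (∫ p : ℝ × ℝ × ℝ, sg p.1 p.2.1 * sg p.1 p.2.2 ∂(ν.prod (ν.prod ν)))
      + (∫ p : ℝ × ℝ × ℝ, sg p.2.1 p.1 * sg p.2.1 p.2.2 ∂(ν.prod (ν.prod ν)))
      + (∫ p : ℝ × ℝ × ℝ, sg p.2.2 p.1 * sg p.2.2 p.2.1 ∂(ν.prod (ν.prod ν))) = 1 := by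
    have E1 : (∫ p : ℝ × ℝ × ℝ, (sg p.1 p.2.1 * sg p.1 p.2.2 + sg p.2.1 p.1 * sg p.2.1 p.2.2)
          + sg p.2.2 p.1 * sg p.2.2 p.2.1 ∂(ν.prod (ν.prod ν)))
        = (∫ p : ℝ × ℝ × ℝ, sg p.1 p.2.1 * sg p.1 p.2.2 + sg p.2.1 p.1 * sg p.2.1 p.2.2
            ∂(ν.prod (ν.prod ν)))
          + ∫ p : ℝ × ℝ × ℝ, sg p.2.2 p.1 * sg p.2.2 p.2.1 ∂(ν.prod (ν.prod ν)) :=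
      integral_add ((int_f1 ν).add (int_f2 ν)) (int_f3 ν)
    have E2 : (∫ p : ℝ × ℝ × ℝ, sg p.1 p.2.1 * sg p.1 p.2.2 + sg p.2.1 p.1 * sg p.2.1 p.2.2
          ∂(ν.prod (ν.prod ν)))
        = (∫ p : ℝ × ℝ × ℝ, sg p.1 p.2.1 * sg p.1 p.2.2 ∂(ν.prod (ν.prod ν)))
          + ∫ p : ℝ × ℝ × ℝ, sg p.2.1 p.1 * sg p.2.1 p.2.2 ∂(ν.prod (ν.prod ν)) :=
      integral_add (int_f1 ν) (int_f2 ν)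
    rw [← E2, ← E1]
    have hae : (fun p : ℝ × ℝ × ℝ =>
        sg p.1 p.2.1 * sg p.1 p.2.2 + sg p.2.1 p.1 * sg p.2.1 p.2.2 + sg p.2.2 p.1 * sg p.2.2 p.2.1)
        =ᵐ[ν.prod (ν.prod ν)] fun _ => (1 : ℝ) := by
      refine measure_mono_null (fun p hp => ?_) (tdiag_null ν hν)
      simp only [Set.mem_setOf_eq, Set.mem_compl_iff] at hp ⊢
      by_contra hne
      apply hp
      rw [sgn3_id p.1 p.2.1 p.2.2, if_neg]
      intro hc
      exact hne hc.1
    rw [integral_congr_ae hae]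
    simp
  have e2 := (hK_eq ν).trans (hJ_eq ν).symm
  have e3 := (hL_eq ν).trans e2
  linarith

end nu3

/-- The cell index for an `X`-variable. -/
def cX (i k : ℕ) : (ℕ × ℕ) × Bool := ((i, k), false)
/-- The cell index for an `R`-variable. -/
def cR (i k : ℕ) : (ℕ × ℕ) × Bool := ((i, k), true)

/-- The whole family of random variables, indexed by cells. -/
def Fam {Ω : Type*} (X R : ℕ → ℕ → Ω → ℝ) : (ℕ × ℕ) × Bool → Ω → ℝ :=
  fun p => if p.2 then R p.1.1 p.1.2 else X p.1.1 p.1.2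

section OmegaSide
variable {Ω : Type*} [MeasurableSpace Ω] {μ : Measure Ω} {X R : ℕ → ℕ → Ω → ℝ} {q : ℕ → ℝ}

lemma Fam_X (i k : ℕ) : Fam X R (cX i k) = X i k := rfl
lemma Fam_R (i k : ℕ) : Fam X R (cR i k) = R i k := rfl

lemma Setup.indep' (hs : Setup μ X R q) :
    iIndepFun (Fam X R) μ :=
  hs.indep

lemma Setup.measF (hs : Setup μ X R q) : ∀ p, Measurable (Fam X R p) := by
  rintro ⟨⟨i, k⟩, (_ | _)⟩
  · exact hs.measX i k
  · exact hs.measR i k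

lemma Setup.abs_R_le (hs : Setup μ X R q) (i k : ℕ) (ω : Ω) : |R i k ω| ≤ 1 := by
  rcases hs.Rval i k ω with h | h <;> rw [h] <;> norm_num

/-- marginal law of column `k`. -/
noncomputable def nu {Ω : Type*} [MeasurableSpace Ω] (μ : Measure Ω)
    (X : ℕ → ℕ → Ω → ℝ) (k : ℕ) : Measure ℝ := μ.map (X 0 k)

lemma Setup.nu_prob (hs : Setup μ X R q) (k : ℕ) : IsProbabilityMeasure (nu μ X k) := by
  haveI := hs.isProb
  exact Measure.isProbabilityMeasure_map (hs.measX 0 k).aemeasurable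

lemma Setup.nu_atomless (hs : Setup μ X R q) (k : ℕ) (x : ℝ) : nu μ X k {x} = 0 := by
  rw [nu, Measure.map_apply (hs.measX 0 k) (measurableSet_singleton x)]
  exact hs.contX 0 k x

lemma Setup.mapX (hs : Setup μ X R q) (i k : ℕ) : μ.map (X i k) = nu μ X k := hs.identX i k

lemma Setup.mapPairX (hs : Setup μ X R q) {i j : ℕ} (k : ℕ) (hij : i ≠ j) :
    μ.map (fun ω => (X i k ω, X j k ω)) = (nu μ X k).prod (nu μ X k) := by
  haveI := hs.isProb
  have hI : IndepFun (X i k) (X j k) μ :=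
    hs.indep'.indepFun (show cX i k ≠ cX j k by simp [cX, hij])
  rw [(indepFun_iff_map_prod_eq_prod_map_map (hs.measX i k).aemeasurable
    (hs.measX j k).aemeasurable).1 hI, hs.mapX i k, hs.mapX j k]

lemma Setup.E_sgn_pair (hs : Setup μ X R q) {i j : ℕ} (k : ℕ) (hij : i ≠ j) :
    ∫ ω, sg (X i k ω) (X j k ω) ∂μ = 0 := by
  haveI := hs.isProb
  haveI := hs.nu_prob k
  have hmp : AEMeasurable (fun ω => (X i k ω, X j k ω)) μ :=
    ((hs.measX i k).prodMk (hs.measX j k)).aemeasurable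
  have := integral_map (μ := μ) hmp
    (f := fun p : ℝ × ℝ => sg p.1 p.2)
    ((sg_meas measurable_fst measurable_snd).aestronglyMeasurable)
  rw [show (fun ω => sg (X i k ω) (X j k ω))
      = fun ω => sg ((X i k ω, X j k ω)).1 ((X i k ω, X j k ω)).2 from rfl, ← this,
    hs.mapPairX k hij]
  exact int_sg_pair (nu μ X k)

lemma Setup.null_eqX (hs : Setup μ X R q) {i j : ℕ} (k : ℕ) (hij : i ≠ j) :
    μ {ω | X i k ω = X j k ω} = 0 := by
  haveI := hs.isProb
  haveI := hs.nu_prob k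
  have hmp : Measurable (fun ω => (X i k ω, X j k ω)) :=
    (hs.measX i k).prodMk (hs.measX j k)
  have hms : MeasurableSet {p : ℝ × ℝ | p.1 = p.2} :=
    measurableSet_eq_fun measurable_fst measurable_snd
  have : μ {ω | X i k ω = X j k ω}
      = μ.map (fun ω => (X i k ω, X j k ω)) {p : ℝ × ℝ | p.1 = p.2} := by
    rw [Measure.map_apply hmp hms]; rfl
  rw [this, hs.mapPairX k hij]
  exact diag_null (nu μ X k) (hs.nu_atomless k)

lemma Setup.E_sgn3 (hs : Setup μ X R q) {a b c : ℕ} (k : ℕ)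
    (hab : a ≠ b) (hac : a ≠ c) (hbc : b ≠ c) :
    ∫ ω, sg (X a k ω) (X b k ω) * sg (X a k ω) (X c k ω) ∂μ = 1 / 3 := by
  haveI := hs.isProb
  haveI := hs.nu_prob k
  have hIp : IndepFun (fun ω => (X b k ω, X c k ω)) (X a k) μ :=
    hs.indep'.indepFun_prodMk hs.measF (cX b k) (cX c k) (cX a k)
      (by simp [cX, hab.symm]) (by simp [cX, hac.symm])
  have hI : IndepFun (X a k) (fun ω => (X b k ω, X c k ω)) μ := hIp.symm
  have hmap : μ.map (fun ω => (X a k ω, (X b k ω, X c k ω)))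
      = (nu μ X k).prod ((nu μ X k).prod (nu μ X k)) := by
    rw [(indepFun_iff_map_prod_eq_prod_map_map (hs.measX a k).aemeasurable
      ((hs.measX b k).prodMk (hs.measX c k)).aemeasurable).1 hI,
      hs.mapX a k, hs.mapPairX k hbc]
  have hmp : AEMeasurable (fun ω => (X a k ω, (X b k ω, X c k ω))) μ :=
    ((hs.measX a k).prodMk ((hs.measX b k).prodMk (hs.measX c k))).aemeasurable
  have hint := integral_map (μ := μ) hmp
    (f := fun p : ℝ × ℝ × ℝ => sg p.1 p.2.1 * sg p.1 p.2.2)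
    ((by fun_prop : Measurable fun p : ℝ × ℝ × ℝ =>
      sg p.1 p.2.1 * sg p.1 p.2.2).aestronglyMeasurable)
  rw [show (fun ω => sg (X a k ω) (X b k ω) * sg (X a k ω) (X c k ω))
      = fun ω => sg ((X a k ω, (X b k ω, X c k ω))).1 ((X a k ω, (X b k ω, X c k ω))).2.1
          * sg ((X a k ω, (X b k ω, X c k ω))).1 ((X a k ω, (X b k ω, X c k ω))).2.2 from rfl,
    ← hint, hmap]
  exact int_sg3 (nu μ X k) (hs.nu_atomless k)

lemma Setup.E_R (hs : Setup μ X R q) (i k : ℕ) : ∫ ω, R i k ω ∂μ = q k := by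
  haveI := hs.isProb
  have hA : MeasurableSet {ω | R i k ω = 1} := by
    have := hs.measR i k (measurableSet_singleton (1 : ℝ))
    simpa [Set.preimage] using this
  have hpt : (fun ω => R i k ω) = Set.indicator {ω | R i k ω = 1} (fun _ => (1 : ℝ)) := by
    funext ω
    rcases hs.Rval i k ω with h | h
    · rw [h, Set.indicator_of_notMem]
      simp [Set.mem_setOf_eq, h]
    · rw [h, Set.indicator_of_mem]
      exact h
  rw [hpt, integral_indicator_const _ hA, measureReal_def, hs.Rq i k, ENNReal.toReal_ofReal (hs.q_nonneg k)]
  simp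

end OmegaSide

/-- summand of `tauP` -/
noncomputable def tP {Ω : Type*} (X R : ℕ → ℕ → Ω → ℝ) (k l i j : ℕ) (ω : Ω) : ℝ :=
  sg (X i k ω) (X j k ω) * sg (X i l ω) (X j l ω)
    * (R i k ω * R j k ω * R i l ω * R j l ω)

/-- canonical share-one-factor -/
noncomputable def Bq {Ω : Type*} (X R : ℕ → ℕ → Ω → ℝ) (m a b c : ℕ) (ω : Ω) : ℝ :=
  sg (X a m ω) (X b m ω) * sg (X a m ω) (X c m ω) * (R a m ω * R b m ω * R c m ω)

lemma _root_.ProbabilityTheory.IndepFun.integral_mul_of_integrable {Ω : Type*} [MeasurableSpace Ω]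
    {μ : Measure Ω} {f g : Ω → ℝ} (h : IndepFun f g μ) (hf : Integrable f μ)
    (hg : Integrable g μ) : ∫ ω, (f * g) ω ∂μ = (∫ ω, f ω ∂μ) * ∫ ω, g ω ∂μ :=
  h.integral_mul_eq_mul_integral hf.1 hg.1

section OmegaSide2
variable {Ω : Type*} [MeasurableSpace Ω] {μ : Measure Ω} {X R : ℕ → ℕ → Ω → ℝ} {q : ℕ → ℝ}

lemma Setup.indep_grp (hs : Setup μ X R q) (S T : Finset ((ℕ × ℕ) × Bool)) (hST : Disjoint S T)
    {φ : ((i : S) → ℝ) → ℝ} {ψ : ((i : T) → ℝ) → ℝ}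
    (hφ : Measurable φ) (hψ : Measurable ψ) :
    IndepFun (fun ω => φ fun i => Fam X R i ω) (fun ω => ψ fun i => Fam X R i ω) μ :=
  (hs.indep'.indepFun_finset S T hST hs.measF).comp hφ hψ

lemma Setup.meas_tP (hs : Setup μ X R q) (k l i j : ℕ) : Measurable (tP X R k l i j) :=
  ((sg_meas (hs.measX i k) (hs.measX j k)).mul (sg_meas (hs.measX i l) (hs.measX j l))).mul
    ((((hs.measR i k).mul (hs.measR j k)).mul (hs.measR i l)).mul (hs.measR j l))

lemma Setup.abs_tP_le (hs : Setup μ X R q) (k l i j : ℕ) (ω : Ω) : |tP X R k l i j ω| ≤ 1 :=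
  abs_mul_le_one (abs_mul_le_one (abs_sg_le _ _) (abs_sg_le _ _))
    (abs_mul_le_one (abs_mul_le_one (abs_mul_le_one (hs.abs_R_le i k ω) (hs.abs_R_le j k ω))
      (hs.abs_R_le i l ω)) (hs.abs_R_le j l ω))

lemma Setup.int_tP (hs : Setup μ X R q) (k l i j : ℕ) : Integrable (tP X R k l i j) μ := by
  haveI := hs.isProb
  exact ibdd (hs.meas_tP k l i j).aestronglyMeasurable (hs.abs_tP_le k l i j)

lemma Setup.meas_Bq (hs : Setup μ X R q) (m a b c : ℕ) : Measurable (Bq X R m a b c) :=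
  ((sg_meas (hs.measX a m) (hs.measX b m)).mul (sg_meas (hs.measX a m) (hs.measX c m))).mul
    (((hs.measR a m).mul (hs.measR b m)).mul (hs.measR c m))

lemma Setup.abs_Bq_le (hs : Setup μ X R q) (m a b c : ℕ) (ω : Ω) : |Bq X R m a b c ω| ≤ 1 :=
  abs_mul_le_one (abs_mul_le_one (abs_sg_le _ _) (abs_sg_le _ _))
    (abs_mul_le_one (abs_mul_le_one (hs.abs_R_le a m ω) (hs.abs_R_le b m ω)) (hs.abs_R_le c m ω))

lemma Setup.int_R (hs : Setup μ X R q) (i k : ℕ) : Integrable (R i k) μ := by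
  haveI := hs.isProb
  exact ibdd (hs.measR i k).aestronglyMeasurable (hs.abs_R_le i k)

lemma Setup.E_RRc (hs : Setup μ X R q) {i k j l' : ℕ} (h : (i, k) ≠ (j, l')) :
    ∫ ω, R i k ω * R j l' ω ∂μ = q k * q l' := by
  haveI := hs.isProb
  have hI : IndepFun (R i k) (R j l') μ :=
    hs.indep'.indepFun (show cR i k ≠ cR j l' by simp [cR, Prod.ext_iff] at h ⊢; tauto)
  have := hI.integral_mul_of_integrable (hs.int_R i k) (hs.int_R j l')
  rw [hs.E_R i k, hs.E_R j l'] at this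
  exact this

lemma Setup.E_RRR (hs : Setup μ X R q) {a b c k : ℕ} (hab : a ≠ b) (hac : a ≠ c) (hbc : b ≠ c) :
    ∫ ω, R a k ω * R b k ω * R c k ω ∂μ = q k * q k * q k := by
  haveI := hs.isProb
  have hIp : IndepFun (fun ω => (R a k ω, R b k ω)) (R c k) μ :=
    hs.indep'.indepFun_prodMk hs.measF (cR a k) (cR b k) (cR c k)
      (by simp [cR, hac]) (by simp [cR, hbc])
  have hI : IndepFun (fun ω => R a k ω * R b k ω) (R c k) μ := by
    have := hIp.comp (measurable_fst.mul measurable_snd) measurable_id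
    exact this
  have h2 := hI.integral_mul_of_integrable
    (ibdd ((hs.measR a k).mul (hs.measR b k)).aestronglyMeasurable
      (fun ω => abs_mul_le_one (hs.abs_R_le a k ω) (hs.abs_R_le b k ω)))
    (hs.int_R c k)
  have h3 : ∫ ω, R a k ω * R b k ω ∂μ = q k * q k :=
    hs.E_RRc (by simp [Prod.ext_iff, hab])
  rw [show ((fun ω => R a k ω * R b k ω) * R c k) = fun ω => R a k ω * R b k ω * R c k ω
    from rfl] at h2
  rw [h2, h3, hs.E_R c k]

lemma Setup.E_RRRR (hs : Setup μ X R q) {i j k l : ℕ} (hij : i ≠ j) (hkl : k ≠ l) :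
    ∫ ω, R i k ω * R j k ω * R i l ω * R j l ω ∂μ = q k * q k * (q l * q l) := by
  haveI := hs.isProb
  have hIp : IndepFun (fun ω => (R i k ω, R j k ω)) (fun ω => (R i l ω, R j l ω)) μ :=
    hs.indep'.indepFun_prodMk_prodMk hs.measF (cR i k) (cR j k) (cR i l) (cR j l)
      (by simp [cR, hkl]) (by simp [cR, Prod.ext_iff]; tauto) (by simp [cR, Prod.ext_iff]; tauto)
      (by simp [cR, hkl])
  have hI : IndepFun (fun ω => R i k ω * R j k ω) (fun ω => R i l ω * R j l ω) μ :=
    hIp.comp (measurable_fst.mul measurable_snd) (measurable_fst.mul measurable_snd)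
  have h2 := hI.integral_mul_of_integrable
    (ibdd ((hs.measR i k).mul (hs.measR j k)).aestronglyMeasurable
      (fun ω => abs_mul_le_one (hs.abs_R_le i k ω) (hs.abs_R_le j k ω)))
    (ibdd ((hs.measR i l).mul (hs.measR j l)).aestronglyMeasurable
      (fun ω => abs_mul_le_one (hs.abs_R_le i l ω) (hs.abs_R_le j l ω)))
  have e1 : ∫ ω, R i k ω * R j k ω ∂μ = q k * q k := hs.E_RRc (by simp [Prod.ext_iff, hij])
  have e2 : ∫ ω, R i l ω * R j l ω ∂μ = q l * q l := hs.E_RRc (by simp [Prod.ext_iff, hij])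
  have e3 : ∀ ω, R i k ω * R j k ω * R i l ω * R j l ω
      = (R i k ω * R j k ω) * (R i l ω * R j l ω) := fun ω => by ring
  calc ∫ ω, R i k ω * R j k ω * R i l ω * R j l ω ∂μ
      = ∫ ω, (R i k ω * R j k ω) * (R i l ω * R j l ω) ∂μ := by
        exact integral_congr_ae (Filter.Eventually.of_forall fun ω => e3 ω)
    _ = q k * q k * (q l * q l) := by rw [← e1, ← e2]; exact h2

end OmegaSide2

section OmegaSide3
variable {Ω : Type*} [MeasurableSpace Ω] {μ : Measure Ω} {X R : ℕ → ℕ → Ω → ℝ} {q : ℕ → ℝ}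

lemma Setup.E_Ak (hs : Setup μ X R q) {i j : ℕ} (k : ℕ) (hij : i ≠ j) :
    ∫ ω, sg (X i k ω) (X j k ω) * (R i k ω * R j k ω) ∂μ = 0 := by
  haveI := hs.isProb
  have hIp : IndepFun (fun ω => (X i k ω, X j k ω)) (fun ω => (R i k ω, R j k ω)) μ :=
    hs.indep'.indepFun_prodMk_prodMk hs.measF (cX i k) (cX j k) (cR i k) (cR j k)
      (by simp [cX, cR]) (by simp [cX, cR]) (by simp [cX, cR]) (by simp [cX, cR])
  have hI : IndepFun (fun ω => sg (X i k ω) (X j k ω)) (fun ω => R i k ω * R j k ω) μ :=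
    hIp.comp (sg_meas measurable_fst measurable_snd) (measurable_fst.mul measurable_snd)
  have h2 := hI.integral_mul_of_integrable
    (ibdd (sg_meas (hs.measX i k) (hs.measX j k)).aestronglyMeasurable
      (fun ω => abs_sg_le _ _))
    (ibdd ((hs.measR i k).mul (hs.measR j k)).aestronglyMeasurable
      (fun ω => abs_mul_le_one (hs.abs_R_le i k ω) (hs.abs_R_le j k ω)))
  have e1 := hs.E_sgn_pair k hij
  calc ∫ ω, sg (X i k ω) (X j k ω) * (R i k ω * R j k ω) ∂μ
      = (∫ ω, sg (X i k ω) (X j k ω) ∂μ) * ∫ ω, R i k ω * R j k ω ∂μ := h2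
    _ = 0 := by rw [e1, zero_mul]

lemma Setup.E_t (hs : Setup μ X R q) {k l i j : ℕ} (hkl : k ≠ l) (hij : i ≠ j) :
    ∫ ω, tP X R k l i j ω ∂μ = 0 := by
  haveI := hs.isProb
  classical
  set S4 : Finset ((ℕ × ℕ) × Bool) := {cX i k, cX j k, cR i k, cR j k} with hS4
  set T4 : Finset ((ℕ × ℕ) × Bool) := {cX i l, cX j l, cR i l, cR j l} with hT4
  have hdisj : Disjoint S4 T4 := by
    rw [Finset.disjoint_left]
    rintro p hp hq
    simp only [hS4, hT4, Finset.mem_insert, Finset.mem_singleton] at hp hq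
    rcases hp with rfl|rfl|rfl|rfl <;> rcases hq with h|h|h|h <;>
      simp_all [cX, cR, Prod.ext_iff]
  have hφ : Measurable fun v : (p : S4) → ℝ =>
      sg (v ⟨cX i k, by simp [hS4]⟩) (v ⟨cX j k, by simp [hS4]⟩)
        * (v ⟨cR i k, by simp [hS4]⟩ * v ⟨cR j k, by simp [hS4]⟩) := by fun_prop
  have hψ : Measurable fun v : (p : T4) → ℝ =>
      sg (v ⟨cX i l, by simp [hT4]⟩) (v ⟨cX j l, by simp [hT4]⟩)
        * (v ⟨cR i l, by simp [hT4]⟩ * v ⟨cR j l, by simp [hT4]⟩) := by fun_prop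
  have hI : IndepFun (fun ω => sg (X i k ω) (X j k ω) * (R i k ω * R j k ω))
      (fun ω => sg (X i l ω) (X j l ω) * (R i l ω * R j l ω)) μ :=
    hs.indep_grp S4 T4 hdisj hφ hψ
  have h2 := hI.integral_mul_of_integrable
    (ibdd ((sg_meas (hs.measX i k) (hs.measX j k)).mul
        ((hs.measR i k).mul (hs.measR j k))).aestronglyMeasurable
      (fun ω => abs_mul_le_one (abs_sg_le _ _)
        (abs_mul_le_one (hs.abs_R_le i k ω) (hs.abs_R_le j k ω))))
    (ibdd ((sg_meas (hs.measX i l) (hs.measX j l)).mul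
        ((hs.measR i l).mul (hs.measR j l))).aestronglyMeasurable
      (fun ω => abs_mul_le_one (abs_sg_le _ _)
        (abs_mul_le_one (hs.abs_R_le i l ω) (hs.abs_R_le j l ω))))
  have e0 : ∀ ω, tP X R k l i j ω
      = (sg (X i k ω) (X j k ω) * (R i k ω * R j k ω))
        * (sg (X i l ω) (X j l ω) * (R i l ω * R j l ω)) := fun ω => by
    unfold tP; ring
  calc ∫ ω, tP X R k l i j ω ∂μ
      = ∫ ω, (sg (X i k ω) (X j k ω) * (R i k ω * R j k ω))
          * (sg (X i l ω) (X j l ω) * (R i l ω * R j l ω)) ∂μ :=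
        integral_congr_ae (Filter.Eventually.of_forall e0)
    _ = (∫ ω, sg (X i k ω) (X j k ω) * (R i k ω * R j k ω) ∂μ)
          * ∫ ω, sg (X i l ω) (X j l ω) * (R i l ω * R j l ω) ∂μ := h2
    _ = 0 := by rw [hs.E_Ak k hij, zero_mul]

end OmegaSide3

section OmegaSide4
variable {Ω : Type*} [MeasurableSpace Ω] {μ : Measure Ω} {X R : ℕ → ℕ → Ω → ℝ} {q : ℕ → ℝ}

set_option maxHeartbeats 1000000 in
lemma Setup.E_P3 (hs : Setup μ X R q) {k l i j i' j' : ℕ} (hkl : k ≠ l)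
    (hij : i ≠ j) (hij' : i' ≠ j') (h1 : i ≠ i') (h2 : i ≠ j') (h3 : j ≠ i') (h4 : j ≠ j') :
    ∫ ω, tP X R k l i j ω * tP X R k l i' j' ω ∂μ = 0 := by
  haveI := hs.isProb
  classical
  set S8 : Finset ((ℕ × ℕ) × Bool) :=
    {cX i k, cX j k, cX i l, cX j l, cR i k, cR j k, cR i l, cR j l} with hS8
  set T8 : Finset ((ℕ × ℕ) × Bool) :=
    {cX i' k, cX j' k, cX i' l, cX j' l, cR i' k, cR j' k, cR i' l, cR j' l} with hT8
  have hdisj : Disjoint S8 T8 := by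
    rw [Finset.disjoint_left]
    rintro p hp hq
    simp only [hS8, hT8, Finset.mem_insert, Finset.mem_singleton] at hp hq
    rcases hp with rfl|rfl|rfl|rfl|rfl|rfl|rfl|rfl <;>
      simp [cX, cR, Prod.ext_iff, hkl, hij, hij', h1, h2, h3, h4] at hq
  have hφ : Measurable fun v : (p : S8) → ℝ =>
      sg (v ⟨cX i k, by simp [hS8]⟩) (v ⟨cX j k, by simp [hS8]⟩)
        * sg (v ⟨cX i l, by simp [hS8]⟩) (v ⟨cX j l, by simp [hS8]⟩)
        * (v ⟨cR i k, by simp [hS8]⟩ * v ⟨cR j k, by simp [hS8]⟩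
            * v ⟨cR i l, by simp [hS8]⟩ * v ⟨cR j l, by simp [hS8]⟩) := by fun_prop
  have hψ : Measurable fun v : (p : T8) → ℝ =>
      sg (v ⟨cX i' k, by simp [hT8]⟩) (v ⟨cX j' k, by simp [hT8]⟩)
        * sg (v ⟨cX i' l, by simp [hT8]⟩) (v ⟨cX j' l, by simp [hT8]⟩)
        * (v ⟨cR i' k, by simp [hT8]⟩ * v ⟨cR j' k, by simp [hT8]⟩
            * v ⟨cR i' l, by simp [hT8]⟩ * v ⟨cR j' l, by simp [hT8]⟩) := by fun_prop
  have hI : IndepFun (tP X R k l i j) (tP X R k l i' j') μ :=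
    hs.indep_grp S8 T8 hdisj hφ hψ
  have h5 := hI.integral_mul_of_integrable (hs.int_tP k l i j) (hs.int_tP k l i' j')
  calc ∫ ω, tP X R k l i j ω * tP X R k l i' j' ω ∂μ
      = (∫ ω, tP X R k l i j ω ∂μ) * ∫ ω, tP X R k l i' j' ω ∂μ := h5
    _ = 0 := by rw [hs.E_t hkl hij, zero_mul]

lemma Setup.E_Bq (hs : Setup μ X R q) {m a b c : ℕ} (hab : a ≠ b) (hac : a ≠ c) (hbc : b ≠ c) :
    ∫ ω, Bq X R m a b c ω ∂μ = 1 / 3 * (q m * q m * q m) := by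
  haveI := hs.isProb
  classical
  set S3 : Finset ((ℕ × ℕ) × Bool) := {cX a m, cX b m, cX c m} with hS3
  set T3 : Finset ((ℕ × ℕ) × Bool) := {cR a m, cR b m, cR c m} with hT3
  have hdisj : Disjoint S3 T3 := by
    rw [Finset.disjoint_left]
    rintro p hp hq
    simp only [hS3, hT3, Finset.mem_insert, Finset.mem_singleton] at hp hq
    rcases hp with rfl|rfl|rfl <;> rcases hq with h|h|h <;> simp_all [cX, cR, Prod.ext_iff]
  have hφ : Measurable fun v : (p : S3) → ℝ =>
      sg (v ⟨cX a m, by simp [hS3]⟩) (v ⟨cX b m, by simp [hS3]⟩)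
        * sg (v ⟨cX a m, by simp [hS3]⟩) (v ⟨cX c m, by simp [hS3]⟩) := by fun_prop
  have hψ : Measurable fun v : (p : T3) → ℝ =>
      v ⟨cR a m, by simp [hT3]⟩ * v ⟨cR b m, by simp [hT3]⟩ * v ⟨cR c m, by simp [hT3]⟩ := by
    fun_prop
  have hI : IndepFun (fun ω => sg (X a m ω) (X b m ω) * sg (X a m ω) (X c m ω))
      (fun ω => R a m ω * R b m ω * R c m ω) μ :=
    hs.indep_grp S3 T3 hdisj hφ hψ
  have h5 := hI.integral_mul_of_integrable
    (ibdd ((sg_meas (hs.measX a m) (hs.measX b m)).mul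
        (sg_meas (hs.measX a m) (hs.measX c m))).aestronglyMeasurable
      (fun ω => abs_mul_le_one (abs_sg_le _ _) (abs_sg_le _ _)))
    (ibdd (((hs.measR a m).mul (hs.measR b m)).mul (hs.measR c m)).aestronglyMeasurable
      (fun ω => abs_mul_le_one (abs_mul_le_one (hs.abs_R_le a m ω) (hs.abs_R_le b m ω))
        (hs.abs_R_le c m ω)))
  calc ∫ ω, Bq X R m a b c ω ∂μ
      = (∫ ω, sg (X a m ω) (X b m ω) * sg (X a m ω) (X c m ω) ∂μ)
          * ∫ ω, R a m ω * R b m ω * R c m ω ∂μ := h5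
    _ = 1 / 3 * (q m * q m * q m) := by
        rw [hs.E_sgn3 m hab hac hbc, hs.E_RRR hab hac hbc]

lemma Setup.meas_Bq' (hs : Setup μ X R q) (m a b c : ℕ) : Measurable (Bq X R m a b c) :=
  hs.meas_Bq m a b c

set_option maxHeartbeats 1000000 in
lemma Setup.E_P2 (hs : Setup μ X R q) {k l a b c : ℕ} (hkl : k ≠ l)
    (hab : a ≠ b) (hac : a ≠ c) (hbc : b ≠ c) :
    ∫ ω, Bq X R k a b c ω * Bq X R l a b c ω ∂μ
      = 1 / 3 * (q k * q k * q k) * (1 / 3 * (q l * q l * q l)) := by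
  haveI := hs.isProb
  classical
  set S6 : Finset ((ℕ × ℕ) × Bool) := {cX a k, cX b k, cX c k, cR a k, cR b k, cR c k} with hS6
  set T6 : Finset ((ℕ × ℕ) × Bool) := {cX a l, cX b l, cX c l, cR a l, cR b l, cR c l} with hT6
  have hdisj : Disjoint S6 T6 := by
    rw [Finset.disjoint_left]
    rintro p hp hq
    simp only [hS6, hT6, Finset.mem_insert, Finset.mem_singleton] at hp hq
    rcases hp with rfl|rfl|rfl|rfl|rfl|rfl <;>
      simp [cX, cR, Prod.ext_iff, hkl, hab, hac, hbc] at hq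
  have hφ : Measurable fun v : (p : S6) → ℝ =>
      sg (v ⟨cX a k, by simp [hS6]⟩) (v ⟨cX b k, by simp [hS6]⟩)
        * sg (v ⟨cX a k, by simp [hS6]⟩) (v ⟨cX c k, by simp [hS6]⟩)
        * (v ⟨cR a k, by simp [hS6]⟩ * v ⟨cR b k, by simp [hS6]⟩
            * v ⟨cR c k, by simp [hS6]⟩) := by fun_prop
  have hψ : Measurable fun v : (p : T6) → ℝ =>
      sg (v ⟨cX a l, by simp [hT6]⟩) (v ⟨cX b l, by simp [hT6]⟩)
        * sg (v ⟨cX a l, by simp [hT6]⟩) (v ⟨cX c l, by simp [hT6]⟩)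
        * (v ⟨cR a l, by simp [hT6]⟩ * v ⟨cR b l, by simp [hT6]⟩
            * v ⟨cR c l, by simp [hT6]⟩) := by fun_prop
  have hI : IndepFun (Bq X R k a b c) (Bq X R l a b c) μ :=
    hs.indep_grp S6 T6 hdisj hφ hψ
  have hint : ∀ m : ℕ, Integrable (Bq X R m a b c) μ := fun m =>
    ibdd (hs.meas_Bq m a b c).aestronglyMeasurable (hs.abs_Bq_le m a b c)
  have h5 := hI.integral_mul_of_integrable (hint k) (hint l)
  calc ∫ ω, Bq X R k a b c ω * Bq X R l a b c ω ∂μ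
      = (∫ ω, Bq X R k a b c ω ∂μ) * ∫ ω, Bq X R l a b c ω ∂μ := h5
    _ = _ := by rw [hs.E_Bq hab hac hbc, hs.E_Bq hab hac hbc]

lemma Setup.Rsq (hs : Setup μ X R q) (i k : ℕ) (ω : Ω) : R i k ω * R i k ω = R i k ω := by
  rcases hs.Rval i k ω with h | h <;> rw [h] <;> ring

lemma sg_sq {a b : ℝ} (h : a ≠ b) : sg a b * sg a b = 1 := by
  rcases Real.sign_apply_eq_of_ne_zero (a - b) (sub_ne_zero_of_ne h) with h' | h' <;>
    rw [show sg a b = Real.sign (a - b) from rfl, h'] <;> norm_num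

lemma Setup.E_P1 (hs : Setup μ X R q) {k l i j : ℕ} (hkl : k ≠ l) (hij : i ≠ j) :
    ∫ ω, tP X R k l i j ω * tP X R k l i j ω ∂μ = q k * q k * (q l * q l) := by
  haveI := hs.isProb
  have hN : μ ({ω | X i k ω = X j k ω} ∪ {ω | X i l ω = X j l ω}) = 0 :=
    measure_union_null (hs.null_eqX k hij) (hs.null_eqX l hij)
  have hae : (fun ω => tP X R k l i j ω * tP X R k l i j ω)
      =ᵐ[μ] fun ω => R i k ω * R j k ω * R i l ω * R j l ω := by
    refine measure_mono_null (fun ω hω => ?_) hN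
    by_contra hc
    simp only [Set.mem_union, Set.mem_setOf_eq] at hc
    push_neg at hc
    obtain ⟨hk, hl⟩ := hc
    apply hω
    show tP X R k l i j ω * tP X R k l i j ω = R i k ω * R j k ω * R i l ω * R j l ω
    calc tP X R k l i j ω * tP X R k l i j ω
        = (sg (X i k ω) (X j k ω) * sg (X i k ω) (X j k ω))
            * ((sg (X i l ω) (X j l ω) * sg (X i l ω) (X j l ω))
            * ((R i k ω * R i k ω) * ((R j k ω * R j k ω)
            * ((R i l ω * R i l ω) * (R j l ω * R j l ω))))) := by unfold tP; ring
      _ = R i k ω * R j k ω * R i l ω * R j l ω := by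
          rw [sg_sq hk, sg_sq hl, hs.Rsq i k ω, hs.Rsq j k ω, hs.Rsq i l ω, hs.Rsq j l ω]
          ring
  rw [integral_congr_ae hae]
  exact hs.E_RRRR hij hkl

end OmegaSide4

section OmegaSide5
variable {Ω : Type*} [MeasurableSpace Ω] {μ : Measure Ω} {X R : ℕ → ℕ → Ω → ℝ} {q : ℕ → ℝ}

/-- common index `i` in first position of both pairs -/
lemma Setup.E_pat1 (hs : Setup μ X R q) {k l i j j' : ℕ} (hkl : k ≠ l)
    (hij : i ≠ j) (hij' : i ≠ j') (hjj' : j ≠ j') :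
    ∫ ω, tP X R k l i j ω * tP X R k l i j' ω ∂μ
      = 1 / 3 * (q k * q k * q k) * (1 / 3 * (q l * q l * q l)) := by
  haveI := hs.isProb
  have hpt : ∀ ω, tP X R k l i j ω * tP X R k l i j' ω
      = Bq X R k i j j' ω * Bq X R l i j j' ω := by
    intro ω
    unfold tP Bq
    calc sg (X i k ω) (X j k ω) * sg (X i l ω) (X j l ω)
          * (R i k ω * R j k ω * R i l ω * R j l ω)
          * (sg (X i k ω) (X j' k ω) * sg (X i l ω) (X j' l ω)
            * (R i k ω * R j' k ω * R i l ω * R j' l ω))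
        = R i k ω * R i k ω * (R i l ω * R i l ω
            * (sg (X i k ω) (X j k ω) * sg (X i l ω) (X j l ω)
              * sg (X i k ω) (X j' k ω) * sg (X i l ω) (X j' l ω)
              * (R j k ω * R j l ω * R j' k ω * R j' l ω))) := by ring
      _ = R i k ω * (R i l ω
            * (sg (X i k ω) (X j k ω) * sg (X i l ω) (X j l ω)
              * sg (X i k ω) (X j' k ω) * sg (X i l ω) (X j' l ω)
              * (R j k ω * R j l ω * R j' k ω * R j' l ω))) := by
          rw [hs.Rsq i k ω, hs.Rsq i l ω]
      _ = sg (X i k ω) (X j k ω) * sg (X i k ω) (X j' k ω)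
            * (R i k ω * R j k ω * R j' k ω)
            * (sg (X i l ω) (X j l ω) * sg (X i l ω) (X j' l ω)
              * (R i l ω * R j l ω * R j' l ω)) := by ring
  rw [integral_congr_ae (Filter.Eventually.of_forall hpt)]
  exact hs.E_P2 hkl hij hij' hjj'

/-- common index `j` in second position of both pairs -/
lemma Setup.E_pat2 (hs : Setup μ X R q) {k l i j i' : ℕ} (hkl : k ≠ l)
    (hij : i ≠ j) (hi'j : i' ≠ j) (hii' : i ≠ i') :
    ∫ ω, tP X R k l i j ω * tP X R k l i' j ω ∂μ
      = 1 / 3 * (q k * q k * q k) * (1 / 3 * (q l * q l * q l)) := by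
  haveI := hs.isProb
  have hpt : ∀ ω, tP X R k l i j ω * tP X R k l i' j ω
      = Bq X R k j i i' ω * Bq X R l j i i' ω := by
    intro ω
    unfold tP Bq
    rw [sg_flip (X i k ω) (X j k ω), sg_flip (X i l ω) (X j l ω),
      sg_flip (X i' k ω) (X j k ω), sg_flip (X i' l ω) (X j l ω)]
    calc -sg (X j k ω) (X i k ω) * -sg (X j l ω) (X i l ω)
          * (R i k ω * R j k ω * R i l ω * R j l ω)
          * (-sg (X j k ω) (X i' k ω) * -sg (X j l ω) (X i' l ω)
            * (R i' k ω * R j k ω * R i' l ω * R j l ω))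
        = R j k ω * R j k ω * (R j l ω * R j l ω
            * (sg (X j k ω) (X i k ω) * sg (X j l ω) (X i l ω)
              * sg (X j k ω) (X i' k ω) * sg (X j l ω) (X i' l ω)
              * (R i k ω * R i l ω * R i' k ω * R i' l ω))) := by ring
      _ = R j k ω * (R j l ω
            * (sg (X j k ω) (X i k ω) * sg (X j l ω) (X i l ω)
              * sg (X j k ω) (X i' k ω) * sg (X j l ω) (X i' l ω)
              * (R i k ω * R i l ω * R i' k ω * R i' l ω))) := by
          rw [hs.Rsq j k ω, hs.Rsq j l ω]
      _ = sg (X j k ω) (X i k ω) * sg (X j k ω) (X i' k ω)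
            * (R j k ω * R i k ω * R i' k ω)
            * (sg (X j l ω) (X i l ω) * sg (X j l ω) (X i' l ω)
              * (R j l ω * R i l ω * R i' l ω)) := by ring
  rw [integral_congr_ae (Filter.Eventually.of_forall hpt)]
  exact hs.E_P2 hkl hij.symm hi'j.symm hii'

/-- common index `i`, first position of pair 1, second of pair 2 -/
lemma Setup.E_pat3 (hs : Setup μ X R q) {k l i j i' : ℕ} (hkl : k ≠ l)
    (hij : i ≠ j) (hi'i : i' ≠ i) (hi'j : i' ≠ j) :
    ∫ ω, tP X R k l i j ω * tP X R k l i' i ω ∂μ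
      = 1 / 3 * (q k * q k * q k) * (1 / 3 * (q l * q l * q l)) := by
  haveI := hs.isProb
  have hpt : ∀ ω, tP X R k l i j ω * tP X R k l i' i ω
      = Bq X R k i j i' ω * Bq X R l i j i' ω := by
    intro ω
    unfold tP Bq
    rw [sg_flip (X i' k ω) (X i k ω), sg_flip (X i' l ω) (X i l ω)]
    calc sg (X i k ω) (X j k ω) * sg (X i l ω) (X j l ω)
          * (R i k ω * R j k ω * R i l ω * R j l ω)
          * (-sg (X i k ω) (X i' k ω) * -sg (X i l ω) (X i' l ω)
            * (R i' k ω * R i k ω * R i' l ω * R i l ω))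
        = R i k ω * R i k ω * (R i l ω * R i l ω
            * (sg (X i k ω) (X j k ω) * sg (X i l ω) (X j l ω)
              * sg (X i k ω) (X i' k ω) * sg (X i l ω) (X i' l ω)
              * (R j k ω * R j l ω * R i' k ω * R i' l ω))) := by ring
      _ = R i k ω * (R i l ω
            * (sg (X i k ω) (X j k ω) * sg (X i l ω) (X j l ω)
              * sg (X i k ω) (X i' k ω) * sg (X i l ω) (X i' l ω)
              * (R j k ω * R j l ω * R i' k ω * R i' l ω))) := by
          rw [hs.Rsq i k ω, hs.Rsq i l ω]
      _ = sg (X i k ω) (X j k ω) * sg (X i k ω) (X i' k ω)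
            * (R i k ω * R j k ω * R i' k ω)
            * (sg (X i l ω) (X j l ω) * sg (X i l ω) (X i' l ω)
              * (R i l ω * R j l ω * R i' l ω)) := by ring
  rw [integral_congr_ae (Filter.Eventually.of_forall hpt)]
  exact hs.E_P2 hkl hij hi'i.symm (fun h => hi'j h.symm)

/-- common index `j`, second position of pair 1, first of pair 2 -/
lemma Setup.E_pat4 (hs : Setup μ X R q) {k l i j j' : ℕ} (hkl : k ≠ l)
    (hij : i ≠ j) (hjj' : j ≠ j') (hij' : i ≠ j') :
    ∫ ω, tP X R k l i j ω * tP X R k l j j' ω ∂μ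
      = 1 / 3 * (q k * q k * q k) * (1 / 3 * (q l * q l * q l)) := by
  haveI := hs.isProb
  have hpt : ∀ ω, tP X R k l i j ω * tP X R k l j j' ω
      = Bq X R k j i j' ω * Bq X R l j i j' ω := by
    intro ω
    unfold tP Bq
    rw [sg_flip (X i k ω) (X j k ω), sg_flip (X i l ω) (X j l ω)]
    calc -sg (X j k ω) (X i k ω) * -sg (X j l ω) (X i l ω)
          * (R i k ω * R j k ω * R i l ω * R j l ω)
          * (sg (X j k ω) (X j' k ω) * sg (X j l ω) (X j' l ω)
            * (R j k ω * R j' k ω * R j l ω * R j' l ω))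
        = R j k ω * R j k ω * (R j l ω * R j l ω
            * (sg (X j k ω) (X i k ω) * sg (X j l ω) (X i l ω)
              * sg (X j k ω) (X j' k ω) * sg (X j l ω) (X j' l ω)
              * (R i k ω * R i l ω * R j' k ω * R j' l ω))) := by ring
      _ = R j k ω * (R j l ω
            * (sg (X j k ω) (X i k ω) * sg (X j l ω) (X i l ω)
              * sg (X j k ω) (X j' k ω) * sg (X j l ω) (X j' l ω)
              * (R i k ω * R i l ω * R j' k ω * R j' l ω))) := by
          rw [hs.Rsq j k ω, hs.Rsq j l ω]
      _ = sg (X j k ω) (X i k ω) * sg (X j k ω) (X j' k ω)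
            * (R j k ω * R i k ω * R j' k ω)
            * (sg (X j l ω) (X i l ω) * sg (X j l ω) (X j' l ω)
              * (R j l ω * R i l ω * R j' l ω)) := by ring
  rw [integral_congr_ae (Filter.Eventually.of_forall hpt)]
  exact hs.E_P2 hkl hij.symm hjj' hij'

end OmegaSide5

/-- the value pattern of `∫ tP i j * tP i' j'` -/
noncomputable def Wv (A B : ℝ) (i j i' j' : ℕ) : ℝ :=
  if i' = i ∧ j' = j then A else if i' = i ∨ i' = j ∨ j' = i ∨ j' = j then B else 0

section Counting
variable (A B : ℝ)

lemma Wv_decomp {i j i' j' : ℕ} (hj : j < i) (hj' : j' < i') :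
    Wv A B i j i' j'
      = A * (if i' = i ∧ j' = j then 1 else 0)
        + B * ((if i' = i then 1 else 0) + (if i' = j then 1 else 0)
            + (if j' = i then 1 else 0) + (if j' = j then 1 else 0)
            - 2 * (if i' = i ∧ j' = j then 1 else 0)) := by
  unfold Wv
  split_ifs <;> first | (exfalso; omega) | ring | (exfalso; tauto)

lemma sum_ind_eq {n i j : ℕ} (hj : j < i) (hi : i < n) :
    ∑ i' ∈ Finset.range n, ∑ j' ∈ Finset.range i',
      (if i' = i ∧ j' = j then (1 : ℝ) else 0) = 1 := by
  rw [Finset.sum_eq_single_of_mem i (Finset.mem_range.2 hi)]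
  · have : ∀ j' ∈ Finset.range i, (if i = i ∧ j' = j then (1:ℝ) else 0)
        = if j' = j then (1:ℝ) else 0 := by
      intro j' _; simp
    rw [Finset.sum_congr rfl this, Finset.sum_ite_eq' (Finset.range i) j (fun _ => (1:ℝ)),
      if_pos (Finset.mem_range.2 hj)]
  · intro i' _ hne
    refine Finset.sum_eq_zero fun j' _ => ?_
    rw [if_neg]; exact fun h => hne h.1

lemma sum_ind_fst {n i : ℕ} (hi : i < n) :
    ∑ i' ∈ Finset.range n, ∑ j' ∈ Finset.range i',
      (if i' = i then (1 : ℝ) else 0) = i := by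
  have h1 : ∀ i' ∈ Finset.range n, (∑ j' ∈ Finset.range i', if i' = i then (1:ℝ) else 0)
      = if i' = i then (i' : ℝ) else 0 := by
    intro i' _
    rw [Finset.sum_const, Finset.card_range]
    by_cases h : i' = i <;> simp [h]
  rw [Finset.sum_congr rfl h1]
  have h2 : ∀ i' ∈ Finset.range n, (if i' = i then (i' : ℝ) else 0)
      = if i' = i then (fun x : ℕ => (x : ℝ)) i' else 0 := fun _ _ => rfl
  rw [Finset.sum_congr rfl h2, Finset.sum_ite_eq' (Finset.range n) i,
    if_pos (Finset.mem_range.2 hi)]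

lemma sum_ind_snd {n i : ℕ} (hi : i < n) :
    ∑ i' ∈ Finset.range n, ∑ j' ∈ Finset.range i',
      (if j' = i then (1 : ℝ) else 0) = (n : ℝ) - 1 - i := by
  have h1 : ∀ i' ∈ Finset.range n, (∑ j' ∈ Finset.range i', if j' = i then (1:ℝ) else 0)
      = if i < i' then (1:ℝ) else 0 := by
    intro i' _
    rw [Finset.sum_ite_eq' (Finset.range i') i (fun _ => (1:ℝ))]
    simp [Finset.mem_range]
  rw [Finset.sum_congr rfl h1, Finset.sum_boole]
  have h2 : Finset.filter (fun i' => i < i') (Finset.range n) = Finset.Ico (i+1) n := by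
    ext x; simp [Finset.mem_Ico, Finset.mem_range]; omega
  rw [h2, Nat.card_Ico]
  have h3 : ((n - (i+1) : ℕ) : ℝ) = (n:ℝ) - ((i:ℝ)+1) := by
    rw [Nat.cast_sub (by omega : i + 1 ≤ n)]
    push_cast
    ring
  rw [h3]
  ring

lemma sum_Wv_inner {n i j : ℕ} (hj : j < i) (hi : i < n) :
    ∑ i' ∈ Finset.range n, ∑ j' ∈ Finset.range i', Wv A B i j i' j'
      = A + (2 * (n : ℝ) - 4) * B := by
  have hjn : j < n := hj.trans hi
  have step : ∀ i' ∈ Finset.range n, ∀ j' ∈ Finset.range i',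
      Wv A B i j i' j'
        = A * (if i' = i ∧ j' = j then 1 else 0)
          + B * ((if i' = i then 1 else 0) + (if i' = j then 1 else 0)
              + (if j' = i then 1 else 0) + (if j' = j then 1 else 0)
              - 2 * (if i' = i ∧ j' = j then 1 else 0)) := by
    intro i' _ j' hj'
    exact Wv_decomp A B hj (Finset.mem_range.1 hj')
  calc ∑ i' ∈ Finset.range n, ∑ j' ∈ Finset.range i', Wv A B i j i' j'
      = ∑ i' ∈ Finset.range n, ∑ j' ∈ Finset.range i',
          (A * (if i' = i ∧ j' = j then 1 else 0)
            + B * ((if i' = i then 1 else 0) + (if i' = j then 1 else 0)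
                + (if j' = i then 1 else 0) + (if j' = j then 1 else 0)
                - 2 * (if i' = i ∧ j' = j then 1 else 0))) := by
        refine Finset.sum_congr rfl fun i' hi' => Finset.sum_congr rfl fun j' hj' => ?_
        exact step i' hi' j' hj'
    _ = A + (2 * (n : ℝ) - 4) * B := by
        simp only [Finset.sum_add_distrib, Finset.sum_sub_distrib, ← Finset.mul_sum]
        rw [sum_ind_eq hj hi, sum_ind_fst hi, sum_ind_fst hjn, sum_ind_snd hi, sum_ind_snd hjn]
        have hin : (i:ℝ) + 1 ≤ n := by exact_mod_cast hi
        have hji : (j:ℝ) + 1 ≤ i := by exact_mod_cast hj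
        ring

lemma sum_Wv_total (n : ℕ) :
    ∑ i ∈ Finset.range n, ∑ j ∈ Finset.range i,
        (∑ i' ∈ Finset.range n, ∑ j' ∈ Finset.range i', Wv A B i j i' j')
      = ((n : ℝ) * ((n : ℝ) - 1) / 2) * (A + (2 * (n : ℝ) - 4) * B) := by
  have h1 : ∀ i ∈ Finset.range n, ∀ j ∈ Finset.range i,
      (∑ i' ∈ Finset.range n, ∑ j' ∈ Finset.range i', Wv A B i j i' j')
        = A + (2 * (n : ℝ) - 4) * B := fun i hi j hj =>
    sum_Wv_inner A B (Finset.mem_range.1 hj) (Finset.mem_range.1 hi)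
  calc ∑ i ∈ Finset.range n, ∑ j ∈ Finset.range i,
        (∑ i' ∈ Finset.range n, ∑ j' ∈ Finset.range i', Wv A B i j i' j')
      = ∑ i ∈ Finset.range n, ∑ _j ∈ Finset.range i, (A + (2 * (n : ℝ) - 4) * B) := by
        refine Finset.sum_congr rfl fun i hi => Finset.sum_congr rfl fun j hj => ?_
        exact h1 i hi j hj
    _ = ∑ i ∈ Finset.range n, (i : ℝ) * (A + (2 * (n : ℝ) - 4) * B) := by
        refine Finset.sum_congr rfl fun i _ => ?_
        rw [Finset.sum_const, Finset.card_range, nsmul_eq_mul]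
    _ = (∑ i ∈ Finset.range n, (i : ℝ)) * (A + (2 * (n : ℝ) - 4) * B) := by
        rw [Finset.sum_mul]
    _ = ((n : ℝ) * ((n : ℝ) - 1) / 2) * (A + (2 * (n : ℝ) - 4) * B) := by
        congr 1
        rcases Nat.eq_zero_or_pos n with rfl | hn
        · simp
        · have h2 := Finset.sum_range_id_mul_two n
          have h3 : ((∑ i ∈ Finset.range n, i : ℕ) : ℝ) * 2 = (n : ℝ) * ((n : ℝ) - 1) := by
            have h4 : (((∑ i ∈ Finset.range n, i) * 2 : ℕ) : ℝ) = ((n * (n - 1) : ℕ) : ℝ) := by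
              exact_mod_cast congrArg (Nat.cast : ℕ → ℝ) h2
            rw [Nat.cast_mul, Nat.cast_mul, Nat.cast_sub hn] at h4
            push_cast at h4 ⊢
            linarith
          push_cast at h3 ⊢
          linarith

end Counting

/-- Under `H₀` and MCAR, for each pair `k ≠ l`,
`E(τ̃_kl²) = (4/(n(n-1))) q_k² q_l² ((n-2) q_k q_l / 9 + 1/2)`. -/
theorem expectation_tauP_sq {Ω : Type*} [MeasurableSpace Ω] (μ : Measure Ω)
    (X R : ℕ → ℕ → Ω → ℝ) (q : ℕ → ℝ) (hs : Setup μ X R q)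
    (n k l : ℕ) (hkl : k ≠ l) :
    ∫ ω, (tauP X R n k l ω) ^ 2 ∂μ
      = 4 / ((n : ℝ) * ((n : ℝ) - 1)) * (q k) ^ 2 * (q l) ^ 2
          * (((n : ℝ) - 2) * q k * q l / 9 + 1 / 2) := by
  haveI := hs.isProb
  rcases Nat.lt_or_ge n 2 with hn | hn
  · interval_cases n <;> simp [tauP] <;> norm_num
  · have hn2 : (2 : ℝ) ≤ (n : ℝ) := by exact_mod_cast hn
    have hNe : (n : ℝ) * ((n : ℝ) - 1) ≠ 0 := by nlinarith
    set A := q k * q k * (q l * q l) with hA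
    set B := 1 / 3 * (q k * q k * q k) * (1 / 3 * (q l * q l * q l)) with hB
    have hpt : ∀ ω, (tauP X R n k l ω) ^ 2
        = (2 / ((n:ℝ) * ((n:ℝ) - 1))) ^ 2
          * ∑ i ∈ Finset.range n, ∑ i' ∈ Finset.range n, ∑ j ∈ Finset.range i,
              ∑ j' ∈ Finset.range i', tP X R k l i j ω * tP X R k l i' j' ω := by
      intro ω
      have h1 : tauP X R n k l ω
          = (2 / ((n:ℝ) * ((n:ℝ) - 1)))
            * ∑ i ∈ Finset.range n, ∑ j ∈ Finset.range i, tP X R k l i j ω := rfl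
      rw [h1, mul_pow]
      congr 1
      rw [sq, Finset.sum_mul_sum]
      refine Finset.sum_congr rfl fun i _ => Finset.sum_congr rfl fun i' _ => ?_
      rw [Finset.sum_mul_sum]
    have hint2 : ∀ i j i' j', Integrable (fun ω => tP X R k l i j ω * tP X R k l i' j' ω) μ :=
      fun i j i' j' =>
        ibdd ((hs.meas_tP k l i j).mul (hs.meas_tP k l i' j')).aestronglyMeasurable
          (fun ω => abs_mul_le_one (hs.abs_tP_le k l i j ω) (hs.abs_tP_le k l i' j' ω))
    have hval : ∀ i ∈ Finset.range n, ∀ i' ∈ Finset.range n, ∀ j ∈ Finset.range i,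
        ∀ j' ∈ Finset.range i',
        ∫ ω, tP X R k l i j ω * tP X R k l i' j' ω ∂μ = Wv A B i j i' j' := by
      intro i hi i' hi' j hj j' hj'
      rw [Finset.mem_range] at hi hi' hj hj'
      by_cases h0 : i' = i ∧ j' = j
      · obtain ⟨rfl, rfl⟩ := h0
        rw [Wv, if_pos ⟨rfl, rfl⟩, hA]
        exact hs.E_P1 hkl (by omega)
      · by_cases h1 : i' = i
        · subst h1
          have hjj' : j' ≠ j := fun h => h0 ⟨rfl, h⟩
          rw [Wv, if_neg h0, if_pos (Or.inl rfl), hB]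
          exact hs.E_pat1 hkl (by omega) (by omega) (by omega)
        · by_cases h2 : i' = j
          · subst h2
            rw [Wv, if_neg h0, if_pos (Or.inr (Or.inl rfl)), hB]
            exact hs.E_pat4 hkl (by omega) (by omega) (by omega)
          · by_cases h3 : j' = i
            · subst h3
              rw [Wv, if_neg h0, if_pos (Or.inr (Or.inr (Or.inl rfl))), hB]
              exact hs.E_pat3 hkl (by omega) (by omega) (by omega)
            · by_cases h4 : j' = j
              · subst h4
                rw [Wv, if_neg h0, if_pos (Or.inr (Or.inr (Or.inr rfl))), hB]
                exact hs.E_pat2 hkl (by omega) (by omega) (by omega)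
              · rw [Wv, if_neg h0, if_neg (by tauto)]
                exact hs.E_P3 hkl (by omega) (by omega) (by omega) (by omega)
                  (by omega) (by omega)
    calc ∫ ω, (tauP X R n k l ω) ^ 2 ∂μ
        = ∫ ω, (2 / ((n:ℝ) * ((n:ℝ) - 1))) ^ 2
            * ∑ i ∈ Finset.range n, ∑ i' ∈ Finset.range n, ∑ j ∈ Finset.range i,
                ∑ j' ∈ Finset.range i', tP X R k l i j ω * tP X R k l i' j' ω ∂μ :=
          integral_congr_ae (Filter.Eventually.of_forall hpt)
      _ = (2 / ((n:ℝ) * ((n:ℝ) - 1))) ^ 2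
            * ∫ ω, ∑ i ∈ Finset.range n, ∑ i' ∈ Finset.range n, ∑ j ∈ Finset.range i,
                ∑ j' ∈ Finset.range i', tP X R k l i j ω * tP X R k l i' j' ω ∂μ :=
          integral_const_mul _ _
      _ = (2 / ((n:ℝ) * ((n:ℝ) - 1))) ^ 2
            * ∑ i ∈ Finset.range n, ∑ i' ∈ Finset.range n, ∑ j ∈ Finset.range i,
                ∑ j' ∈ Finset.range i', ∫ ω, tP X R k l i j ω * tP X R k l i' j' ω ∂μ := by
          congr 1
          rw [integral_finset_sum _ (fun i _ => integrable_finset_sum _ (fun i' _ =>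
            integrable_finset_sum _ (fun j _ => integrable_finset_sum _ (fun j' _ =>
              hint2 i j i' j'))))]
          refine Finset.sum_congr rfl fun i _ => ?_
          rw [integral_finset_sum _ (fun i' _ => integrable_finset_sum _ (fun j _ =>
            integrable_finset_sum _ (fun j' _ => hint2 i j i' j')))]
          refine Finset.sum_congr rfl fun i' _ => ?_
          rw [integral_finset_sum _ (fun j _ => integrable_finset_sum _ (fun j' _ =>
            hint2 i j i' j'))]
          refine Finset.sum_congr rfl fun j _ => ?_
          rw [integral_finset_sum _ (fun j' _ => hint2 i j i' j')]
      _ = (2 / ((n:ℝ) * ((n:ℝ) - 1))) ^ 2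
            * ∑ i ∈ Finset.range n, ∑ i' ∈ Finset.range n, ∑ j ∈ Finset.range i,
                ∑ j' ∈ Finset.range i', Wv A B i j i' j' := by
          congr 1
          refine Finset.sum_congr rfl fun i hi => Finset.sum_congr rfl fun i' hi' =>
            Finset.sum_congr rfl fun j hj => Finset.sum_congr rfl fun j' hj' => ?_
          exact hval i hi i' hi' j hj j' hj'
      _ = (2 / ((n:ℝ) * ((n:ℝ) - 1))) ^ 2
            * ∑ i ∈ Finset.range n, ∑ j ∈ Finset.range i, ∑ i' ∈ Finset.range n,
                ∑ j' ∈ Finset.range i', Wv A B i j i' j' := by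
          congr 1
          exact Finset.sum_congr rfl fun i _ => Finset.sum_comm
      _ = (2 / ((n:ℝ) * ((n:ℝ) - 1))) ^ 2
            * (((n : ℝ) * ((n : ℝ) - 1) / 2) * (A + (2 * (n : ℝ) - 4) * B)) := by
          rw [sum_Wv_total]
      _ = 4 / ((n : ℝ) * ((n : ℝ) - 1)) * (q k) ^ 2 * (q l) ^ 2
            * (((n : ℝ) - 2) * q k * q l / 9 + 1 / 2) := by
          rw [hA, hB]
          field_simp
          ring


end KendallMissing
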